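/- arXiv:1210.6918 — 3 statements merged into one kernel-verified Lean document; each statement's English description precedes it below -/
import Mathlib

section
/- Let G = (V,E) be a connected finite simple graph containing no cycle of length 4, no cycle of length 5, and no cycle of length 6 (as subgraphs, not necessarily induced), with L(G) ≠ ∅. Then G is well-covered if and only if for every vertex v ∈ V \ L(G), the subgraph of G induced by D(v) is a copy of K_1 or K_2 (i.e., D(v) is either a single vertex, or a pair of adjacent vertices). -/
namespace WC

variable {V : Type*}

/-- A set of vertices is independent if its elements are pairwise nonadjacent. -/
def IsIndep (G : SimpleGraph V) (S : Set V) : Prop :=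
  S.Pairwise fun a b => ¬ G.Adj a b

/-- A maximal independent set: independent and not properly contained in another
independent set. -/
def IsMaxIndep (G : SimpleGraph V) (S : Set V) : Prop :=
  IsIndep G S ∧ ∀ T : Set V, IsIndep G T → S ⊆ T → T = S

/-- A maximal independent set of the subgraph of `G` induced by `A`
(equivalently, a subset of `A`, independent in `G`, maximal among such). -/
def IsMaxIndepOn (G : SimpleGraph V) (A S : Set V) : Prop :=
  S ⊆ A ∧ IsIndep G S ∧ ∀ T : Set V, T ⊆ A → IsIndep G T → S ⊆ T → T = S

/-- The weight of a set of vertices: `w(S) = Σ_{s ∈ S} w(s)`. -/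
noncomputable def wsum (w : V → ℝ) (S : Set V) : ℝ := ∑ᶠ x ∈ S, w x

/-- `G` is `w`-well-covered if all maximal independent sets have the same weight. -/
def WWC (G : SimpleGraph V) (w : V → ℝ) : Prop :=
  ∀ S T : Set V, IsMaxIndep G S → IsMaxIndep G T → wsum w S = wsum w T

/-- `G` is well-covered if all maximal independent sets have the same cardinality. -/
def WellCovered (G : SimpleGraph V) : Prop :=
  ∀ S T : Set V, IsMaxIndep G S → IsMaxIndep G T → S.ncard = T.ncard

/-- `N(S)`, the set of vertices at distance exactly 1 from `S`. -/
def nbhd (G : SimpleGraph V) (S : Set V) : Set V :=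
  {x | x ∉ S ∧ ∃ s ∈ S, G.Adj x s}

/-- `N[S]`, the set of vertices at distance at most 1 from `S`. -/
def cnbhd (G : SimpleGraph V) (S : Set V) : Set V :=
  S ∪ {x | ∃ s ∈ S, G.Adj x s}

/-- `N₂(S)`, the set of vertices at distance exactly 2 from `S`. -/
def n2 (G : SimpleGraph V) (S : Set V) : Set V :=
  {x | x ∉ cnbhd G S ∧ ∃ y ∈ nbhd G S, G.Adj x y}

/-- `S` dominates `T` if `T ⊆ N[S]`. -/
def Dominates (G : SimpleGraph V) (S T : Set V) : Prop := T ⊆ cnbhd G S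

/-- `D(v) = N(v) \ N(N₂(v))`. -/
def dSet (G : SimpleGraph V) (v : V) : Set V :=
  G.neighborSet v \ nbhd G (n2 G {v})

/-- `L(G)`: vertices of degree 1, or of degree 2 lying on a triangle. -/
def lSet (G : SimpleGraph V) : Set V :=
  {v | (G.neighborSet v).ncard = 1 ∨
    ((G.neighborSet v).ncard = 2 ∧ ∃ a b, G.Adj v a ∧ G.Adj v b ∧ G.Adj a b)}

/-- `G` contains a cycle of length `k` as a (not necessarily induced) subgraph. -/
def HasCycleLen (G : SimpleGraph V) (k : ℕ) : Prop :=
  ∃ (u : V) (p : G.Walk u u), p.IsCycle ∧ p.length = k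

/-- A vertex is simplicial if its closed neighborhood induces a complete subgraph. -/
def Simplicial (G : SimpleGraph V) (v : V) : Prop :=
  ∀ a ∈ G.neighborSet v, ∀ b ∈ G.neighborSet v, a ≠ b → G.Adj a b

/-- `B` is an induced complete bipartite subgraph of `G` on (nonempty, disjoint)
parts `BX` and `BY`. -/
def IsCompleteBipartiteOn (G : SimpleGraph V) (BX BY : Set V) : Prop :=
  BX.Nonempty ∧ BY.Nonempty ∧ Disjoint BX BY ∧ IsIndep G BX ∧ IsIndep G BY ∧
    ∀ x ∈ BX, ∀ y ∈ BY, G.Adj x y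

/-- `B` (on parts `BX`, `BY`) is a generating subgraph of `G`: there is an
independent set `S` (a witness) such that `S ∪ BX` and `S ∪ BY` are both
maximal independent sets of `G`. -/
def IsGenerating (G : SimpleGraph V) (BX BY : Set V) : Prop :=
  ∃ S : Set V, IsIndep G S ∧ IsMaxIndep G (S ∪ BX) ∧ IsMaxIndep G (S ∪ BY)

/-- The edge `xy` is relating: there is an independent set `S` such that
`S ∪ {x}` and `S ∪ {y}` are both maximal independent sets of `G`. -/
def IsRelating (G : SimpleGraph V) (x y : V) : Prop :=
  G.Adj x y ∧ ∃ S : Set V, IsIndep G S ∧ IsMaxIndep G (S ∪ {x}) ∧ IsMaxIndep G (S ∪ {y})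

end WC

open WC

section Aux
set_option linter.unusedSectionVars false
variable {V : Type*} [Fintype V] {G : SimpleGraph V}

lemma indep_iff {S : Set V} : IsIndep G S ↔ ∀ ⦃a⦄, a ∈ S → ∀ ⦃b⦄, b ∈ S → G.Adj a b → False := by
  constructor
  · intro h a ha b hb hab
    exact h ha hb hab.ne hab
  · intro h a ha b hb _ hab
    exact h ha hb hab

lemma IsIndep.mono {S T : Set V} (h : IsIndep G T) (hST : S ⊆ T) : IsIndep G S :=
  Set.Pairwise.mono hST h

lemma indep_insert {S : Set V} (hS : IsIndep G S) (x : V) (hx : ∀ y ∈ S, ¬ G.Adj x y) :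
    IsIndep G (insert x S) := by
  haveI : Std.Symm (fun a b => ¬ G.Adj a b) := ⟨fun a b hab h => hab h.symm⟩
  rw [IsIndep, Set.pairwise_insert_of_symm]
  · exact ⟨hS, fun b hb _ => hx b hb⟩

/-- maximal independent subsets of `A` extending `S`, with domination property. -/
lemma exists_maxon (A S : Set V) (hSA : S ⊆ A) (hS : IsIndep G S) :
    ∃ M : Set V, S ⊆ M ∧ M ⊆ A ∧ IsIndep G M ∧
      ∀ x ∈ A, x ∉ M → ∃ y ∈ M, G.Adj x y := by
  obtain ⟨M, hM, hmax⟩ := Set.Finite.exists_maximalFor (id : Set V → Set V)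
    {T : Set V | S ⊆ T ∧ T ⊆ A ∧ IsIndep G T} (Set.toFinite _) ⟨S, subset_rfl, hSA, hS⟩
  refine ⟨M, hM.1, hM.2.1, hM.2.2, ?_⟩
  intro x hxA hxM
  by_contra hno
  push_neg at hno
  have hmem : insert x M ∈ {T : Set V | S ⊆ T ∧ T ⊆ A ∧ IsIndep G T} := by
    refine ⟨hM.1.trans (Set.subset_insert x M), Set.insert_subset hxA hM.2.1,
      indep_insert hM.2.2 x hno⟩
  have := hmax hmem (Set.subset_insert x M)
  exact hxM (this (Set.mem_insert x M))

lemma max_indep_iff {M : Set V} :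
    IsMaxIndep G M ↔ IsIndep G M ∧ ∀ x, x ∉ M → ∃ y ∈ M, G.Adj x y := by
  constructor
  · intro ⟨hind, hmax⟩
    refine ⟨hind, fun x hx => ?_⟩
    by_contra hno
    push_neg at hno
    have := hmax (insert x M) (indep_insert hind x hno) (Set.subset_insert x M)
    exact hx (this ▸ Set.mem_insert x M)
  · intro ⟨hind, hdom⟩
    refine ⟨hind, fun T hT hMT => ?_⟩
    ext t
    refine ⟨fun ht => ?_, fun ht => hMT ht⟩
    by_contra htM
    obtain ⟨y, hy, hadj⟩ := hdom t htM
    exact indep_iff.1 hT ht (hMT hy) hadj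

lemma exists_max_ext (S : Set V) (hS : IsIndep G S) :
    ∃ M : Set V, S ⊆ M ∧ IsMaxIndep G M := by
  obtain ⟨M, h1, _, h3, h4⟩ := exists_maxon Set.univ S (Set.subset_univ S) hS
  exact ⟨M, h1, max_indep_iff.2 ⟨h3, fun x hx => h4 x (Set.mem_univ x) hx⟩⟩

lemma no_c4 (h4 : ¬ HasCycleLen G 4) {a b c d : V} (hab : G.Adj a b) (hbc : G.Adj b c)
    (hcd : G.Adj c d) (hda : G.Adj d a) (hac : a ≠ c) (hbd : b ≠ d) : False := by
  apply h4
  refine ⟨a, .cons hab (.cons hbc (.cons hcd hda.toWalk)), ?_, rfl⟩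
  have h1 := hab.ne
  have h2 := hbc.ne
  have h3 := hcd.ne
  have h4' := hda.ne
  rw [SimpleGraph.Walk.isCycle_def, SimpleGraph.Walk.isTrail_def]
  refine ⟨?_, by simp, ?_⟩
  · simp only [SimpleGraph.Walk.edges_cons, SimpleGraph.Adj.toWalk,
      SimpleGraph.Walk.edges_cons, SimpleGraph.Walk.edges_nil, List.nodup_cons,
      List.mem_cons, List.not_mem_nil, or_false, List.mem_singleton, List.nodup_nil,
      and_true, Sym2.eq, Sym2.rel_iff', Prod.mk.injEq, Prod.swap_prod_mk]
    tauto
  · simp only [SimpleGraph.Walk.support_cons, SimpleGraph.Adj.toWalk,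
      SimpleGraph.Walk.support_nil, List.tail_cons, List.nodup_cons, List.mem_cons,
      List.not_mem_nil, or_false, List.mem_singleton, List.nodup_nil, and_true,
      List.mem_singleton]
    have := h1.symm; have := h2.symm; have := h3.symm; have := h4'.symm
    tauto

lemma no_c5 (h5 : ¬ HasCycleLen G 5) {a b c d e : V} (hab : G.Adj a b) (hbc : G.Adj b c)
    (hcd : G.Adj c d) (hde : G.Adj d e) (hea : G.Adj e a)
    (hac : a ≠ c) (had : a ≠ d) (hbd : b ≠ d) (hbe : b ≠ e) (hce : c ≠ e) : False := by
  apply h5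
  refine ⟨a, .cons hab (.cons hbc (.cons hcd (.cons hde hea.toWalk))), ?_, rfl⟩
  have h1 := hab.ne
  have h2 := hbc.ne
  have h3 := hcd.ne
  have h4' := hde.ne
  have h5' := hea.ne
  rw [SimpleGraph.Walk.isCycle_def, SimpleGraph.Walk.isTrail_def]
  refine ⟨?_, by simp, ?_⟩
  · simp only [SimpleGraph.Walk.edges_cons, SimpleGraph.Adj.toWalk,
      SimpleGraph.Walk.edges_nil, List.nodup_cons, List.mem_cons,
      List.not_mem_nil, or_false, List.mem_singleton, List.nodup_nil,
      and_true, Sym2.eq, Sym2.rel_iff', Prod.mk.injEq, Prod.swap_prod_mk]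
    tauto
  · simp only [SimpleGraph.Walk.support_cons, SimpleGraph.Adj.toWalk,
      SimpleGraph.Walk.support_nil, List.tail_cons, List.nodup_cons, List.mem_cons,
      List.not_mem_nil, or_false, List.mem_singleton, List.nodup_nil, and_true]
    have := h1.symm; have := h2.symm; have := h3.symm; have := h4'.symm; have := h5'.symm
    have := hac.symm; have := had.symm; have := hbd.symm; have := hbe.symm; have := hce.symm
    tauto

end Aux

section Aux2
set_option linter.unusedSectionVars false
variable {V : Type*} [Fintype V] {G : SimpleGraph V}

/-- closed neighborhood -/
def ncl (G : SimpleGraph V) (u : V) : Set V := insert u (G.neighborSet u)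

lemma mem_dSet_iff {a v : V} :
    a ∈ dSet G v ↔ G.Adj v a ∧ ∀ x, G.Adj a x → x ∈ ncl G v := by
  constructor
  · rintro ⟨ha1, ha2⟩
    have hadj : G.Adj v a := ha1
    refine ⟨hadj, fun x hax => ?_⟩
    by_contra hx
    simp only [ncl, Set.mem_insert_iff, SimpleGraph.mem_neighborSet, not_or] at hx
    have hxn2 : x ∈ n2 G {v} := by
      refine ⟨?_, a, ⟨?_, v, rfl, hadj.symm⟩, hax.symm⟩
      · rintro (h | ⟨s, hs, hadj'⟩)
        · exact hx.1 (by simpa using h)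
        · simp only [Set.mem_singleton_iff] at hs
          exact hx.2 (hs ▸ hadj'.symm)
      · simp only [Set.mem_singleton_iff]
        exact fun h => G.irrefl (h ▸ hadj)
    exact ha2 ⟨fun hc => hc.1 (Or.inr ⟨v, rfl, hadj.symm⟩), x, hxn2, hax⟩
  · rintro ⟨hadj, hall⟩
    refine ⟨hadj, ?_⟩
    rintro ⟨-, s, hs, has⟩
    have := hall s has
    simp only [ncl, Set.mem_insert_iff, SimpleGraph.mem_neighborSet] at this
    rcases this with h | h
    · exact hs.1 (Or.inl (by simp [h]))
    · exact hs.1 (Or.inr ⟨v, rfl, h.symm⟩)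

lemma dSet_subset_nbr {a v : V} (ha : a ∈ dSet G v) : G.Adj v a := (mem_dSet_iff.1 ha).1

/-- Structure of vertices in `D(v)`: pendant or one triangle. Needs no `C₄`. -/
lemma dSet_structure (h4 : ¬ HasCycleLen G 4) {a v : V} (ha : a ∈ dSet G v) :
    G.neighborSet a = {v} ∨
      ∃ t, G.Adj v t ∧ G.Adj a t ∧ G.neighborSet a = {v, t} := by
  obtain ⟨hadj, hall⟩ := mem_dSet_iff.1 ha
  by_cases hone : G.neighborSet a = {v}
  · exact Or.inl hone
  · right
    have hv : v ∈ G.neighborSet a := hadj.symm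
    have : ∃ t, t ∈ G.neighborSet a ∧ t ≠ v := by
      by_contra hno
      push_neg at hno
      exact hone (Set.eq_singleton_iff_unique_mem.2 ⟨hv, fun x hx => hno x hx⟩)
    obtain ⟨t, ht, htv⟩ := this
    have hat : G.Adj a t := ht
    have hvt : G.Adj v t := by
      have := hall t hat
      simp only [ncl, Set.mem_insert_iff, SimpleGraph.mem_neighborSet] at this
      rcases this with h | h
      · exact absurd h htv
      · exact h
    refine ⟨t, hvt, hat, ?_⟩
    ext x
    simp only [SimpleGraph.mem_neighborSet, Set.mem_insert_iff, Set.mem_singleton_iff]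
    constructor
    · intro hax
      by_contra hx
      push_neg at hx
      -- x is another neighbor; x ∈ N(v); C4: v - t - a - x - v
      have hxv : G.Adj v x := by
        have := hall x hax
        simp only [ncl, Set.mem_insert_iff, SimpleGraph.mem_neighborSet] at this
        rcases this with h | h
        · exact absurd h hx.1
        · exact h
      exact no_c4 h4 hvt hat.symm hax hxv.symm hadj.ne (fun h => hx.2 h.symm)
    · rintro (rfl | rfl)
      · exact hadj.symm
      · exact hat

lemma mem_lSet_of_dSet (h4 : ¬ HasCycleLen G 4) {a v : V} (ha : a ∈ dSet G v) :
    a ∈ lSet G := by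
  rcases dSet_structure h4 ha with h | ⟨t, hvt, hat, h⟩
  · exact Or.inl (by rw [h]; simp)
  · right
    have hadj := dSet_subset_nbr ha
    have hvne : v ≠ t := hvt.ne
    constructor
    · rw [h, Set.ncard_pair hvne]
    · exact ⟨v, t, hadj.symm, hat, hvt⟩

/-- structure of L-vertices -/
lemma lSet_structure {u : V} (hu : u ∈ lSet G) :
    (∃ s, G.Adj u s ∧ G.neighborSet u = {s}) ∨
      (∃ s t, G.Adj u s ∧ G.Adj u t ∧ G.Adj s t ∧ G.neighborSet u = {s, t}) := by
  rcases hu with h1 | ⟨h2, a, b, hua, hub, hab⟩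
  · obtain ⟨s, hs⟩ := Set.ncard_eq_one.1 h1
    exact Or.inl ⟨s, by rw [← SimpleGraph.mem_neighborSet, hs]; rfl, hs⟩
  · right
    obtain ⟨x, y, hxy, hN⟩ := Set.ncard_eq_two.1 h2
    have haN : a ∈ G.neighborSet u := hua
    have hbN : b ∈ G.neighborSet u := hub
    rw [hN] at haN hbN
    have hab' : a ≠ b := hab.ne
    refine ⟨a, b, hua, hub, hab, ?_⟩
    rw [hN]
    simp only [Set.mem_insert_iff, Set.mem_singleton_iff] at haN hbN
    rcases haN with rfl | rfl
    · rcases hbN with rfl | rfl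
      · exact absurd rfl hab'
      · rfl
    · rcases hbN with rfl | rfl
      · exact Set.pair_comm b a
      · exact absurd rfl hab'

/-- L-vertex whose (closed) neighborhood contains v is in D(v). -/
lemma lSet_mem_dSet {u v : V} (hu : u ∈ lSet G) (hv : G.Adj u v) : u ∈ dSet G v := by
  rcases lSet_structure hu with ⟨s, hus, hN⟩ | ⟨s, t, hus, hut, hst, hN⟩
  · have hvs : v = s := by have : v ∈ G.neighborSet u := hv; rwa [hN] at this
    subst hvs
    refine mem_dSet_iff.2 ⟨hv.symm, fun x hx => ?_⟩
    have hx' : x ∈ G.neighborSet u := hx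
    rw [hN] at hx'
    simp only [Set.mem_singleton_iff] at hx'
    subst hx'
    exact Set.mem_insert _ _
  · have hvmem : v ∈ ({s, t} : Set V) := by have : v ∈ G.neighborSet u := hv; rwa [hN] at this
    refine mem_dSet_iff.2 ⟨hv.symm, fun x hx => ?_⟩
    have hxN : x ∈ ({s, t} : Set V) := by have : x ∈ G.neighborSet u := hx; rwa [hN] at this
    simp only [ncl, Set.mem_insert_iff, SimpleGraph.mem_neighborSet]
    simp only [Set.mem_insert_iff, Set.mem_singleton_iff] at hvmem hxN
    rcases hvmem with rfl | rfl
    · rcases hxN with rfl | rfl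
      · exact Or.inl rfl
      · exact Or.inr hst
    · rcases hxN with rfl | rfl
      · exact Or.inr hst.symm
      · exact Or.inl rfl

/-- closed neighborhood of an L-vertex is a clique -/
lemma ncl_clique {u : V} (hu : u ∈ lSet G) {x y : V} (hx : x ∈ ncl G u) (hy : y ∈ ncl G u)
    (hxy : x ≠ y) : G.Adj x y := by
  simp only [ncl, Set.mem_insert_iff, SimpleGraph.mem_neighborSet] at hx hy
  rcases lSet_structure hu with ⟨s, hus, hN⟩ | ⟨s, t, hus, hut, hst, hN⟩
  · have hxm : x = u ∨ x = s := by
      rcases hx with rfl | h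
      · exact Or.inl rfl
      · exact Or.inr (by have : x ∈ G.neighborSet u := h; rwa [hN] at this)
    have hym : y = u ∨ y = s := by
      rcases hy with rfl | h
      · exact Or.inl rfl
      · exact Or.inr (by have : y ∈ G.neighborSet u := h; rwa [hN] at this)
    rcases hxm with rfl | rfl <;> rcases hym with rfl | rfl
    · exact absurd rfl hxy
    · exact hus
    · exact hus.symm
    · exact absurd rfl hxy
  · have hxm : x = u ∨ x = s ∨ x = t := by
      rcases hx with rfl | h
      · exact Or.inl rfl
      · exact Or.inr (by have : x ∈ G.neighborSet u := h; rwa [hN] at this)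
    have hym : y = u ∨ y = s ∨ y = t := by
      rcases hy with rfl | h
      · exact Or.inl rfl
      · exact Or.inr (by have : y ∈ G.neighborSet u := h; rwa [hN] at this)
    rcases hxm with rfl | rfl | rfl <;> rcases hym with rfl | rfl | rfl
    · exact absurd rfl hxy
    · exact hus
    · exact hut
    · exact hus.symm
    · exact absurd rfl hxy
    · exact hst
    · exact hut.symm
    · exact hst.symm
    · exact absurd rfl hxy

end Aux2

section Aux3
set_option linter.unusedSectionVars false
variable {V : Type*} [Fintype V] {G : SimpleGraph V}

lemma indep_union {S T : Set V} (hS : IsIndep G S) (hT : IsIndep G T)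
    (hST : ∀ s ∈ S, ∀ t ∈ T, ¬ G.Adj s t) : IsIndep G (S ∪ T) := by
  rw [indep_iff]
  intro a ha b hb hab
  rcases ha with ha | ha <;> rcases hb with hb | hb
  · exact indep_iff.1 hS ha hb hab
  · exact hST a ha b hb hab
  · exact hST b hb a ha hab.symm
  · exact indep_iff.1 hT ha hb hab

/-- In a well-covered graph, any two distinct vertices of `D(z)` are adjacent. -/
lemma dSet_adj_of_wc (hwc : WellCovered G) {z a b : V}
    (ha : a ∈ dSet G z) (hb : b ∈ dSet G z) (hne : a ≠ b) : G.Adj a b := by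
  by_contra hnadj
  obtain ⟨J, -, hJW, hJind, hJdom⟩ :=
    exists_maxon (G := G) (ncl G z)ᶜ ∅ (Set.empty_subset _) (Set.pairwise_empty _)
  have hzJ : z ∉ J := fun h => (hJW h) (Set.mem_insert z _)
  have hzadjJ : ∀ y ∈ J, ¬ G.Adj z y := fun y hy hadj => (hJW hy) (Set.mem_insert_iff.2 (Or.inr hadj))
  have hI1 : IsMaxIndep G (insert z J) := by
    refine max_indep_iff.2 ⟨indep_insert hJind z hzadjJ, ?_⟩
    intro x hx
    by_cases hxW : x ∈ (ncl G z)ᶜ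
    · obtain ⟨y, hy, hadj⟩ := hJdom x hxW (fun h => hx (Set.mem_insert_iff.2 (Or.inr h)))
      exact ⟨y, Set.mem_insert_iff.2 (Or.inr hy), hadj⟩
    · have hx' : x ∈ ncl G z := not_not.1 hxW
      rcases hx' with rfl | hxz
      · exact absurd (Set.mem_insert _ _) hx
      · exact ⟨z, Set.mem_insert _ _, (hxz : G.Adj z x).symm⟩
  set F : Set V := {x | x ∈ G.neighborSet z ∧ ∀ j ∈ J, ¬ G.Adj x j} with hF
  have haF : a ∈ F := by
    refine ⟨dSet_subset_nbr ha, fun j hj hadj => ?_⟩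
    have := (mem_dSet_iff.1 ha).2 j hadj
    exact (hJW hj) this
  have hbF : b ∈ F := by
    refine ⟨dSet_subset_nbr hb, fun j hj hadj => ?_⟩
    have := (mem_dSet_iff.1 hb).2 j hadj
    exact (hJW hj) this
  have habind : IsIndep G {a, b} := by
    rw [indep_iff]
    intro x hx y hy hadj
    rcases hx with rfl | hx <;> rcases hy with rfl | hy
    · exact G.irrefl hadj
    · simp only [Set.mem_singleton_iff] at hy; subst hy; exact hnadj hadj
    · simp only [Set.mem_singleton_iff] at hx; subst hx; exact hnadj hadj.symm
    · simp only [Set.mem_singleton_iff] at hx hy; subst hx; subst hy; exact G.irrefl hadj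
  obtain ⟨K, hKab, hKF, hKind, hKdom⟩ := exists_maxon F {a, b}
    (by rintro x (rfl | hx); exacts [haF, by simpa using hx ▸ hbF]) habind
  have hJKdisj : Disjoint J K := by
    rw [Set.disjoint_left]
    intro x hxJ hxK
    exact (hJW hxJ) (Set.mem_insert_iff.2 (Or.inr (hKF hxK).1))
  have hI2 : IsMaxIndep G (J ∪ K) := by
    refine max_indep_iff.2 ⟨indep_union hJind hKind ?_, ?_⟩
    · intro s hs t ht hadj
      exact (hKF ht).2 s hs hadj.symm
    · intro x hx
      rw [Set.mem_union] at hx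
      push_neg at hx
      by_cases hxW : x ∈ (ncl G z)ᶜ
      · obtain ⟨y, hy, hadj⟩ := hJdom x hxW hx.1
        exact ⟨y, Or.inl hy, hadj⟩
      · have hx' : x ∈ ncl G z := not_not.1 hxW
        rcases hx' with rfl | hxz
        · exact ⟨a, Or.inr (hKab (Set.mem_insert _ _)), dSet_subset_nbr ha⟩
        · by_cases hxF : x ∈ F
          · obtain ⟨y, hy, hadj⟩ := hKdom x hxF hx.2
            exact ⟨y, Or.inr hy, hadj⟩
          · rw [hF, Set.mem_setOf_eq] at hxF
            push_neg at hxF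
            obtain ⟨j, hj, hadj⟩ := hxF hxz
            exact ⟨j, Or.inl hj, hadj⟩
  have hcard := hwc _ _ hI1 hI2
  rw [Set.ncard_insert_of_notMem hzJ, Set.ncard_union_eq hJKdisj] at hcard
  have h2K : 2 ≤ K.ncard := by
    have := Set.ncard_le_ncard hKab (Set.toFinite K)
    rwa [Set.ncard_pair hne] at this
  omega

/-- the condition `(*)` also forces pairwise adjacency in each `D(z)`. -/
lemma dSet_adj_of_star
    (hstar : ∀ v ∉ lSet G, (∃ a, dSet G v = {a}) ∨
      (∃ a b, a ≠ b ∧ G.Adj a b ∧ dSet G v = {a, b}))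
    {z a b : V} (ha : a ∈ dSet G z) (hb : b ∈ dSet G z) (hne : a ≠ b) : G.Adj a b := by
  have hmem : ∀ x ∈ dSet G z, x ∈ G.neighborSet z := fun x hx => dSet_subset_nbr hx
  by_cases hz : z ∈ lSet G
  · rcases lSet_structure hz with ⟨s, hus, hN⟩ | ⟨s, t, hus, hut, hst, hN⟩
    · have ha' := hmem a ha; have hb' := hmem b hb
      rw [hN, Set.mem_singleton_iff] at ha' hb'
      exact absurd (ha'.trans hb'.symm) hne
    · have ha' := hmem a ha; have hb' := hmem b hb
      rw [hN] at ha' hb'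
      simp only [Set.mem_insert_iff, Set.mem_singleton_iff] at ha' hb'
      rcases ha' with rfl | rfl <;> rcases hb' with rfl | rfl
      · exact absurd rfl hne
      · exact hst
      · exact hst.symm
      · exact absurd rfl hne
  · rcases hstar z hz with ⟨c, hc⟩ | ⟨c, d, hcd, hadj, hcd'⟩
    · rw [hc, Set.mem_singleton_iff] at ha hb
      exact absurd (ha.trans hb.symm) hne
    · rw [hcd'] at ha hb
      simp only [Set.mem_insert_iff, Set.mem_singleton_iff] at ha hb
      rcases ha with rfl | rfl <;> rcases hb with rfl | rfl
      · exact absurd rfl hne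
      · exact hadj
      · exact hadj.symm
      · exact absurd rfl hne

lemma lSet_two_nbrs {u x y : V} (hu : u ∈ lSet G) (hx : G.Adj u x) (hy : G.Adj u y)
    (hxy : x ≠ y) : G.neighborSet u = {x, y} ∧ G.Adj x y := by
  rcases lSet_structure hu with ⟨s, hus, hN⟩ | ⟨s, t, hus, hut, hst, hN⟩
  · have hx' : x ∈ G.neighborSet u := hx
    have hy' : y ∈ G.neighborSet u := hy
    rw [hN, Set.mem_singleton_iff] at hx' hy'
    exact absurd (hx'.trans hy'.symm) hxy
  · have hsub : ({x, y} : Set V) ⊆ {s, t} := by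
      intro w hw
      simp only [Set.mem_insert_iff, Set.mem_singleton_iff] at hw
      rcases hw with h | h
      · subst h
        have h2 : w ∈ G.neighborSet u := hx
        rwa [hN] at h2
      · subst h
        have h2 : w ∈ G.neighborSet u := hy
        rwa [hN] at h2
    have hstne : s ≠ t := by
      intro h
      have : G.neighborSet u = {s} := by rw [hN, h]; simp
      have hx' : x ∈ G.neighborSet u := hx
      have hy' : y ∈ G.neighborSet u := hy
      rw [this, Set.mem_singleton_iff] at hx' hy'
      exact hxy (hx'.trans hy'.symm)
    have heq : ({x, y} : Set V) = {s, t} := by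
      apply Set.eq_of_subset_of_ncard_le hsub
      rw [Set.ncard_pair hxy, Set.ncard_pair hstne]
    have hadjxy : G.Adj x y := by
      have hxm : x ∈ ({s, t} : Set V) := heq ▸ Set.mem_insert _ _
      have hym : y ∈ ({s, t} : Set V) := heq ▸ (Set.mem_insert_iff.2 (Or.inr rfl))
      simp only [Set.mem_insert_iff, Set.mem_singleton_iff] at hxm hym
      rcases hxm with rfl | rfl <;> rcases hym with rfl | rfl
      · exact absurd rfl hxy
      · exact hst
      · exact hst.symm
      · exact absurd rfl hxy
    exact ⟨by rw [hN, heq], hadjxy⟩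

lemma ncl_eq_of_adj {u u' : V} (hu : u ∈ lSet G) (hu' : u' ∈ lSet G)
    (hadj : G.Adj u u') : ncl G u = ncl G u' := by
  rcases lSet_structure hu with ⟨s, hus, hN⟩ | ⟨s, t, hus, hut, hst, hN⟩
  · have hs : u' = s := by
      have : u' ∈ G.neighborSet u := hadj; rwa [hN, Set.mem_singleton_iff] at this
    subst hs
    rcases lSet_structure hu' with ⟨s', hus', hN'⟩ | ⟨s', t', hus', hut', hst', hN'⟩
    · have hs' : u = s' := by
        have : u ∈ G.neighborSet u' := hadj.symm; rwa [hN', Set.mem_singleton_iff] at this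
      subst hs'
      rw [ncl, ncl, hN, hN']
      ext w; simp only [Set.mem_insert_iff, Set.mem_singleton_iff]; tauto
    · -- u' has two nbrs s', t' forming a triangle with it; u is one of them
      have humem : u = s' ∨ u = t' := by
        have : u ∈ G.neighborSet u' := hadj.symm
        rw [hN'] at this
        simpa using this
      exfalso
      rcases humem with rfl | rfl
      · have : t' ∈ G.neighborSet u := hst'
        rw [hN, Set.mem_singleton_iff] at this
        subst this
        exact G.irrefl hut'
      · have : s' ∈ G.neighborSet u := hst'.symm
        rw [hN, Set.mem_singleton_iff] at this
        subst this
        exact G.irrefl hus'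
  · have hu'mem : u' = s ∨ u' = t := by
      have : u' ∈ G.neighborSet u := hadj
      rw [hN] at this
      simpa using this
    have htN : t ∈ G.neighborSet u := hut
    have hsN : s ∈ G.neighborSet u := hus
    rcases hu'mem with rfl | rfl
    · have hN' := lSet_two_nbrs hu' hadj.symm hst (fun h => G.irrefl (h ▸ hut))
      rw [ncl, ncl, hN, hN'.1]
      ext w; simp only [Set.mem_insert_iff, Set.mem_singleton_iff]; tauto
    · have hN' := lSet_two_nbrs hu' hadj.symm hst.symm (fun h => G.irrefl (h ▸ hus))
      rw [ncl, ncl, hN, hN'.1]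
      ext w; simp only [Set.mem_insert_iff, Set.mem_singleton_iff]; tauto

/-- two closed L-neighborhoods sharing a vertex are equal. -/
lemma ncl_eq_of_mem
    (hD : ∀ z a b, a ∈ dSet G z → b ∈ dSet G z → a ≠ b → G.Adj a b)
    {u u' z : V} (hu : u ∈ lSet G) (hu' : u' ∈ lSet G)
    (hz : z ∈ ncl G u) (hz' : z ∈ ncl G u') : ncl G u = ncl G u' := by
  by_cases h1 : u' ∈ ncl G u
  · rcases h1 with h1 | h1
    · exact h1 ▸ rfl
    · exact ncl_eq_of_adj hu hu' h1
  by_cases h2 : u ∈ ncl G u'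
  · rcases h2 with h2 | h2
    · exact h2 ▸ rfl
    · exact (ncl_eq_of_adj hu' hu h2).symm
  exfalso
  have hne : u ≠ u' := fun h => h2 (h ▸ Set.mem_insert _ _)
  have hzu : G.Adj u z := by
    rcases hz with rfl | hz
    · exact absurd hz' h2
    · exact hz
  have hzu' : G.Adj u' z := by
    rcases hz' with rfl | hz'
    · exact absurd hz h1
    · exact hz'
  have hd : u ∈ dSet G z := lSet_mem_dSet hu hzu
  have hd' : u' ∈ dSet G z := lSet_mem_dSet hu' hzu'
  exact h1 (Set.mem_insert_iff.2 (Or.inr (hD z u u' hd hd' hne)))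

lemma exists_unique_clique_mem {M : Set V} (hM : IsMaxIndep G M) {u : V} (hu : u ∈ lSet G) :
    ∃! m, m ∈ M ∩ ncl G u := by
  have hdom := (max_indep_iff.1 hM).2
  have hex : ∃ m, m ∈ M ∩ ncl G u := by
    by_cases hu_mem : u ∈ M
    · exact ⟨u, hu_mem, Set.mem_insert _ _⟩
    · obtain ⟨y, hy, hadj⟩ := hdom u hu_mem
      exact ⟨y, hy, Set.mem_insert_iff.2 (Or.inr hadj)⟩
  obtain ⟨m, hm⟩ := hex
  refine ⟨m, hm, fun m' hm' => ?_⟩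
  by_contra hne
  exact indep_iff.1 (max_indep_iff.1 hM).1 hm'.1 hm.1 (ncl_clique hu hm'.2 hm.2 hne)

/-- the union of the closed L-neighborhoods. -/
def tSet (G : SimpleGraph V) : Set V := {x | ∃ u, u ∈ lSet G ∧ x ∈ ncl G u}

/-- the key injection between maximal independent sets. -/
lemma key_inj
    (hD : ∀ z a b, a ∈ dSet G z → b ∈ dSet G z → a ≠ b → G.Adj a b)
    {M1 M2 : Set V} (hM1 : IsMaxIndep G M1) (hM2 : IsMaxIndep G M2) :
    ∃ φ : V → V,
      (∀ m, m ∈ tSet G → φ m ∈ M2 ∧ φ m ∈ tSet G ∧ ∀ u, u ∈ lSet G → m ∈ ncl G u → φ m ∈ ncl G u) ∧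
      (∀ m, m ∉ tSet G → φ m = m) ∧ Set.InjOn φ M1 := by
  classical
  refine ⟨fun m => if h : m ∈ tSet G then
      (exists_unique_clique_mem hM2 h.choose_spec.1).exists.choose else m, ?_, ?_, ?_⟩
  · intro m hm
    dsimp only
    rw [dif_pos hm]
    obtain ⟨hu, hmem⟩ := hm.choose_spec
    have hspec := (exists_unique_clique_mem hM2 hu).exists.choose_spec
    refine ⟨hspec.1, ⟨hm.choose, hu, hspec.2⟩, fun u' hu' hmu' => ?_⟩
    have := ncl_eq_of_mem hD hu hu' hmem hmu'
    exact this ▸ hspec.2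
  · intro m hm
    dsimp only
    rw [dif_neg hm]
  · intro m hmM m' hm'M heq
    dsimp only at heq
    by_cases hm : m ∈ tSet G <;> by_cases hm' : m' ∈ tSet G
    · -- both in tSet
      obtain ⟨hu, hmem⟩ := hm.choose_spec
      obtain ⟨hu', hmem'⟩ := hm'.choose_spec
      have hspec := (exists_unique_clique_mem hM2 hu).exists.choose_spec
      have hspec' := (exists_unique_clique_mem hM2 hu').exists.choose_spec
      rw [dif_pos hm, dif_pos hm'] at heq
      -- the common image lies in both cliques, so the cliques coincide
      have hclq : ncl G hm.choose = ncl G hm'.choose :=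
        ncl_eq_of_mem hD hu hu' hspec.2 (heq ▸ hspec'.2)
      -- hence m and m' are both in M1 ∩ (that clique); uniqueness in M1
      have h1 : m ∈ M1 ∩ ncl G hm.choose := ⟨hmM, hmem⟩
      have h2 : m' ∈ M1 ∩ ncl G hm.choose := ⟨hm'M, hclq ▸ hmem'⟩
      obtain ⟨w, -, hwuniq⟩ := exists_unique_clique_mem hM1 hu
      exact (hwuniq m h1).trans (hwuniq m' h2).symm
    · exfalso
      rw [dif_pos hm, dif_neg hm'] at heq
      obtain ⟨hu, hmem⟩ := hm.choose_spec
      have hspec := (exists_unique_clique_mem hM2 hu).exists.choose_spec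
      exact hm' (heq ▸ ⟨hm.choose, hu, hspec.2⟩)
    · exfalso
      rw [dif_neg hm, dif_pos hm'] at heq
      obtain ⟨hu', hmem'⟩ := hm'.choose_spec
      have hspec' := (exists_unique_clique_mem hM2 hu').exists.choose_spec
      exact hm (heq ▸ ⟨hm'.choose, hu', hspec'.2⟩)
    · rw [dif_neg hm, dif_neg hm'] at heq
      exact heq

end Aux3

section Aux4
set_option linter.unusedSectionVars false
variable {V : Type*} [Fintype V] {G : SimpleGraph V}

lemma n2_prop {s v : V} (hs : s ∈ n2 G {v}) : s ≠ v ∧ ¬ G.Adj v s :=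
  ⟨fun h => hs.1 (Or.inl (by simp [h])), fun h => hs.1 (Or.inr ⟨v, rfl, h.symm⟩)⟩

lemma count_le_of_cov
    (hD : ∀ z a b, a ∈ dSet G z → b ∈ dSet G z → a ≠ b → G.Adj a b)
    (hcov : ∀ x : V, x ∈ tSet G) {M1 M2 : Set V}
    (hM1 : IsMaxIndep G M1) (hM2 : IsMaxIndep G M2) : M1.ncard ≤ M2.ncard := by
  obtain ⟨φ, hT, hnT, hinj⟩ := key_inj hD hM1 hM2
  exact Set.ncard_le_ncard_of_injOn φ (fun m _ => (hT m (hcov m)).1) hinj (Set.toFinite M2)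

lemma count_lt
    (hD : ∀ z a b, a ∈ dSet G z → b ∈ dSet G z → a ≠ b → G.Adj a b)
    {M1 M2 : Set V} (hM1 : IsMaxIndep G M1) (hM2 : IsMaxIndep G M2)
    (hsub : ∀ m ∈ M1, m ∉ tSet G → m ∈ M2)
    {x0 : V} (hx0 : x0 ∈ M2) (hx0T : x0 ∉ tSet G) (hx0M1 : x0 ∉ M1) :
    M1.ncard < M2.ncard := by
  obtain ⟨φ, hT, hnT, hinj⟩ := key_inj hD hM1 hM2
  have hmaps : ∀ m ∈ M1, φ m ∈ M2 \ {x0} := by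
    intro m hm
    by_cases hmT : m ∈ tSet G
    · refine ⟨(hT m hmT).1, ?_⟩
      simp only [Set.mem_singleton_iff]
      intro h
      exact hx0T (h ▸ (hT m hmT).2.1)
    · rw [hnT m hmT]
      refine ⟨hsub m hm hmT, ?_⟩
      simp only [Set.mem_singleton_iff]
      intro h
      exact hx0M1 (h ▸ hm)
  calc M1.ncard ≤ (M2 \ {x0}).ncard :=
        Set.ncard_le_ncard_of_injOn φ hmaps hinj (Set.toFinite _)
    _ < M2.ncard := Set.ncard_diff_singleton_lt_of_mem hx0 (Set.toFinite M2)

/-- the backwards direction: (*) implies well-covered (only no-C4 needed). -/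
lemma wc_of_star (h4 : ¬ HasCycleLen G 4)
    (hstar : ∀ v ∉ lSet G, (∃ a, dSet G v = {a}) ∨
      (∃ a b, a ≠ b ∧ G.Adj a b ∧ dSet G v = {a, b})) : WellCovered G := by
  have hD : ∀ z a b, a ∈ dSet G z → b ∈ dSet G z → a ≠ b → G.Adj a b :=
    fun z a b ha hb hne => dSet_adj_of_star hstar ha hb hne
  have hcov : ∀ x : V, x ∈ tSet G := by
    intro x
    by_cases hx : x ∈ lSet G
    · exact ⟨x, hx, Set.mem_insert _ _⟩
    · rcases hstar x hx with ⟨a, hDx⟩ | ⟨a, b, hne, hadj, hDx⟩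
      · have ha : a ∈ dSet G x := by rw [hDx]; rfl
        exact ⟨a, mem_lSet_of_dSet h4 ha,
          Set.mem_insert_iff.2 (Or.inr (dSet_subset_nbr ha).symm)⟩
      · have ha : a ∈ dSet G x := by rw [hDx]; exact Set.mem_insert _ _
        exact ⟨a, mem_lSet_of_dSet h4 ha,
          Set.mem_insert_iff.2 (Or.inr (dSet_subset_nbr ha).symm)⟩
  intro S T hS hT
  exact le_antisymm (count_le_of_cov hD hcov hS hT) (count_le_of_cov hD hcov hT hS)

/-- the main forward step: under WC, every vertex is in the closed neighborhood of `L(G)`. -/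
lemma tSet_eq_univ (hwc : WellCovered G) (hconn : G.Connected)
    (h4 : ¬ HasCycleLen G 4) (h5 : ¬ HasCycleLen G 5)
    (hL : (lSet G).Nonempty) : ∀ x : V, x ∈ tSet G := by
  classical
  by_contra hno
  push_neg at hno
  obtain ⟨x1, hx1⟩ := hno
  obtain ⟨u0, hu0⟩ := hL
  have hu0T : u0 ∈ tSet G := ⟨u0, hu0, Set.mem_insert _ _⟩
  obtain ⟨p⟩ := hconn.preconnected u0 x1
  obtain ⟨d, -, hdT, hdT'⟩ := p.exists_boundary_dart (tSet G) hu0T hx1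
  set q := d.fst with hqdef
  set x0 := d.snd with hx0def
  have hqx0 : G.Adj q x0 := d.adj
  have hqT : q ∈ tSet G := hdT
  have hx0T : x0 ∉ tSet G := hdT'
  have hD : ∀ z a b, a ∈ dSet G z → b ∈ dSet G z → a ≠ b → G.Adj a b :=
    fun z a b ha hb hne => dSet_adj_of_wc hwc ha hb hne
  -- D(x0) is empty
  have hnbrT : ∀ a, a ∈ dSet G x0 → False := by
    intro a ha
    exact hx0T ⟨a, mem_lSet_of_dSet h4 ha,
      Set.mem_insert_iff.2 (Or.inr (dSet_subset_nbr ha).symm)⟩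
  have hstep : ∀ w, G.Adj x0 w → ∃ s, s ∈ n2 G {x0} ∧ G.Adj w s := by
    intro w hw
    by_contra hns
    push_neg at hns
    apply hnbrT w
    refine ⟨hw, ?_⟩
    rintro ⟨-, s, hs, hadj⟩
    exact hns s hs hadj
  -- choice of external neighbors
  set f : V → V := fun w => if h : G.Adj x0 w then (hstep w h).choose else w with hfdef
  have hf : ∀ w, G.Adj x0 w → (f w) ∈ n2 G {x0} ∧ G.Adj w (f w) := by
    intro w hw
    have : f w = (hstep w hw).choose := by rw [hfdef]; simp [hw]
    rw [this]
    exact (hstep w hw).choose_spec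
  set Wst : Set V := {w | G.Adj x0 w ∧ w ∉ tSet G ∧ ¬ G.Adj q w} with hWdef
  set P : Set V := insert q (f '' Wst) with hPdef
  -- key non-adjacency facts
  have hfq : ∀ w ∈ Wst, ¬ G.Adj q (f w) := by
    intro w hw hadj
    have hfw := hf w hw.1
    have h1 : f w ≠ x0 := (n2_prop hfw.1).1
    have h2 : q ≠ w := fun h => hw.2.1 (h ▸ hqT)
    exact no_c4 h4 hqx0.symm hadj hfw.2.symm hw.1.symm (fun h => h1 h.symm) h2
  have hff : ∀ w ∈ Wst, ∀ w' ∈ Wst, f w ≠ f w' → ¬ G.Adj (f w) (f w') := by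
    intro w hw w' hw' hne hadj
    have hfw := hf w hw.1
    have hfw' := hf w' hw'.1
    have hww' : w ≠ w' := fun h => hne (h ▸ rfl)
    have h1 : x0 ≠ f w := fun h => (n2_prop hfw.1).1 h.symm
    have h2 : x0 ≠ f w' := fun h => (n2_prop hfw'.1).1 h.symm
    have h3 : w ≠ f w' := fun h => (n2_prop hfw'.1).2 (h ▸ hw.1)
    have h4' : f w ≠ w' := fun h => (n2_prop hfw.1).2 (h ▸ hw'.1)
    exact no_c5 h5 hw.1 hfw.2 hadj hfw'.2.symm hw'.1.symm h1 h2 h3 hww' h4'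
  have hPind : IsIndep G P := by
    rw [indep_iff]
    intro a ha b hb hadj
    rw [hPdef] at ha hb
    rcases ha with rfl | ⟨w, hw, rfl⟩ <;> rcases hb with h | ⟨w', hw', h⟩
    · exact G.irrefl (h ▸ hadj)
    · exact hfq w' hw' (h ▸ hadj)
    · subst h
      exact hfq w hw hadj.symm
    · subst h
      by_cases hsame : f w = f w'
      · exact G.irrefl (hsame ▸ hadj)
      · exact hff w hw w' hw' hsame hadj
  obtain ⟨M1, hPM1, hM1⟩ := exists_max_ext P hPind
  have hqM1 : q ∈ M1 := hPM1 (Set.mem_insert _ _)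
  have hx0M1 : x0 ∉ M1 := fun h =>
    indep_iff.1 (max_indep_iff.1 hM1).1 hqM1 h hqx0
  have hAnadj : ∀ y ∈ M1, y ∉ tSet G → ¬ G.Adj x0 y := by
    intro y hy hyT hadj
    by_cases hqy : G.Adj q y
    · exact indep_iff.1 (max_indep_iff.1 hM1).1 hqM1 hy hqy
    · have hyW : y ∈ Wst := ⟨hadj, hyT, hqy⟩
      have hfy : f y ∈ M1 := hPM1 (Set.mem_insert_iff.2 (Or.inr ⟨y, hyW, rfl⟩))
      exact indep_iff.1 (max_indep_iff.1 hM1).1 hy hfy (hf y hadj).2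
  have hBind : IsIndep G (insert x0 (M1 \ tSet G)) := by
    apply indep_insert ((max_indep_iff.1 hM1).1.mono Set.diff_subset)
    intro y hy
    exact hAnadj y hy.1 hy.2
  obtain ⟨M2, hBM2, hM2⟩ := exists_max_ext _ hBind
  have hlt : M1.ncard < M2.ncard := by
    refine count_lt hD hM1 hM2 ?_ (hBM2 (Set.mem_insert _ _)) hx0T hx0M1
    intro m hm hmT
    exact hBM2 (Set.mem_insert_iff.2 (Or.inr ⟨hm, hmT⟩))
  exact absurd (hwc M1 M2 hM1 hM2) (Nat.ne_of_lt hlt)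

/-- forward direction -/
lemma star_of_wc (hwc : WellCovered G) (hconn : G.Connected)
    (h4 : ¬ HasCycleLen G 4) (h5 : ¬ HasCycleLen G 5)
    (hL : (lSet G).Nonempty) :
    ∀ v ∉ lSet G, (∃ a, dSet G v = {a}) ∨
      (∃ a b, a ≠ b ∧ G.Adj a b ∧ dSet G v = {a, b}) := by
  intro v hv
  obtain ⟨u, huL, hvncl⟩ := tSet_eq_univ hwc hconn h4 h5 hL v
  have hvu : G.Adj u v := by
    rcases hvncl with rfl | h
    · exact absurd huL hv
    · exact h
  have hu_d : u ∈ dSet G v := lSet_mem_dSet huL hvu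
  have hD : ∀ z a b, a ∈ dSet G z → b ∈ dSet G z → a ≠ b → G.Adj a b :=
    fun z a b ha hb hne => dSet_adj_of_wc hwc ha hb hne
  by_cases hone : ∀ b ∈ dSet G v, b = u
  · exact Or.inl ⟨u, Set.eq_singleton_iff_unique_mem.2 ⟨hu_d, hone⟩⟩
  · push_neg at hone
    obtain ⟨b, hb, hbu⟩ := hone
    have hadj : G.Adj u b := hD v u b hu_d hb (Ne.symm hbu)
    refine Or.inr ⟨u, b, Ne.symm hbu, hadj, ?_⟩
    ext c
    simp only [Set.mem_insert_iff, Set.mem_singleton_iff]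
    constructor
    · intro hc
      by_contra hcc
      push_neg at hcc
      have hcb : G.Adj b c := hD v b c hb hc (Ne.symm hcc.2)
      have hcv : G.Adj c v := (dSet_subset_nbr hc).symm
      have hvb : G.Adj v b := dSet_subset_nbr hb
      exact no_c4 h4 hadj hcb hcv (dSet_subset_nbr hu_d)
        (Ne.symm hcc.1) hvb.ne'
    · rintro (rfl | rfl)
      · exact hu_d
      · exact hb

end Aux4

/-- in a connected graph with no `C₄`, `C₅`, `C₆` and `L(G) ≠ ∅`,
`G` is well-covered iff for every `v ∉ L(G)` the subgraph induced by `D(v)` is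
a copy of `K₁` or `K₂`. -/
theorem stmt_13 {V : Type*} [Fintype V] (G : SimpleGraph V) (hconn : G.Connected)
    (h4 : ¬ HasCycleLen G 4) (h5 : ¬ HasCycleLen G 5) (h6 : ¬ HasCycleLen G 6)
    (hL : (lSet G).Nonempty) :
    WellCovered G ↔
      ∀ v : V, v ∉ lSet G →
        (∃ a : V, dSet G v = {a}) ∨
        (∃ a b : V, a ≠ b ∧ G.Adj a b ∧ dSet G v = {a, b}) := by
  constructor
  · intro hwc
    exact star_of_wc hwc hconn h4 h5 hL
  · intro hstar
    exact wc_of_star h4 hstar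
end

section
/- Let G = (V,E) be a finite simple graph containing no cycle of length 4, no cycle of length 5, and no cycle of length 6 (as subgraphs, not necessarily induced). If L(G) = ∅, then every edge of G is a relating edge. (In particular, L(G) = ∅ implies D(v) = ∅ for every vertex v.) -/
open WC


section Aux

variable {V : Type*} {G : SimpleGraph V}

private lemma mk4 {a b c d : V}
    (hab : G.Adj a b) (hbc : G.Adj b c) (hcd : G.Adj c d) (hda : G.Adj d a)
    (hac : a ≠ c) (hbd : b ≠ d) : HasCycleLen G 4 := by
  refine ⟨a, .cons hab (.cons hbc (.cons hcd (.cons hda .nil))), ?_, rfl⟩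
  have := hab.ne; have := hbc.ne; have := hcd.ne; have := hda.ne
  simp_all [SimpleGraph.Walk.isCycle_def, SimpleGraph.Walk.isTrail_def, List.Nodup, Sym2.eq_iff]
  aesop

private lemma mk5 {a b c d e : V}
    (hab : G.Adj a b) (hbc : G.Adj b c) (hcd : G.Adj c d) (hde : G.Adj d e) (hea : G.Adj e a)
    (hac : a ≠ c) (had : a ≠ d) (hbd : b ≠ d) (hbe : b ≠ e) (hce : c ≠ e) :
    HasCycleLen G 5 := by
  refine ⟨a, .cons hab (.cons hbc (.cons hcd (.cons hde (.cons hea .nil)))), ?_, rfl⟩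
  have := hab.ne; have := hbc.ne; have := hcd.ne; have := hde.ne; have := hea.ne
  simp_all [SimpleGraph.Walk.isCycle_def, SimpleGraph.Walk.isTrail_def, List.Nodup, Sym2.eq_iff]
  aesop

private lemma mk6 {a b c d e f : V}
    (hab : G.Adj a b) (hbc : G.Adj b c) (hcd : G.Adj c d) (hde : G.Adj d e)
    (hef : G.Adj e f) (hfa : G.Adj f a)
    (hac : a ≠ c) (had : a ≠ d) (hae : a ≠ e) (hbd : b ≠ d) (hbe : b ≠ e) (hbf : b ≠ f)
    (hce : c ≠ e) (hcf : c ≠ f) (hdf : d ≠ f) :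
    HasCycleLen G 6 := by
  refine ⟨a, .cons hab (.cons hbc (.cons hcd (.cons hde (.cons hef (.cons hfa .nil))))), ?_, rfl⟩
  have := hab.ne; have := hbc.ne; have := hcd.ne; have := hde.ne; have := hef.ne; have := hfa.ne
  simp_all [SimpleGraph.Walk.isCycle_def, SimpleGraph.Walk.isTrail_def, List.Nodup, Sym2.eq_iff]
  aesop

/-- If `a` is a neighbor of `x` and every neighbor of `a` is `x` or adjacent to `x`,
then (no `C₄`, `L(G) = ∅`) gives a contradiction. -/
private lemma core (hL : lSet G = ∅) (h4 : ¬ HasCycleLen G 4) {x a : V} (hxa : G.Adj x a)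
    (hall : ∀ r, G.Adj a r → r = x ∨ G.Adj x r) : False := by
  have hP : ∀ r1 r2, G.Adj a r1 → G.Adj x r1 → G.Adj a r2 → G.Adj x r2 → r1 = r2 := by
    intro r1 r2 h1 h2 h3 h4'
    by_contra hne
    exact h4 (mk4 h1 h2.symm h4' h3.symm hxa.ne.symm hne)
  by_cases hex : ∃ r, G.Adj a r ∧ G.Adj x r
  · obtain ⟨r0, har, hxr⟩ := hex
    have hNa : G.neighborSet a = {x, r0} := by
      ext r
      simp only [SimpleGraph.mem_neighborSet, Set.mem_insert_iff, Set.mem_singleton_iff]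
      constructor
      · intro h
        rcases hall r h with h' | h'
        · exact Or.inl h'
        · exact Or.inr (hP r r0 h h' har hxr)
      · rintro (rfl | rfl)
        · exact hxa.symm
        · exact har
    have hmem : a ∈ lSet G := by
      simp only [lSet, Set.mem_setOf_eq]
      refine Or.inr ⟨?_, x, r0, hxa.symm, har, hxr⟩
      rw [hNa, Set.ncard_pair hxr.ne]
    rw [hL] at hmem
    exact absurd hmem (Set.notMem_empty a)
  · push_neg at hex
    have hNa : G.neighborSet a = {x} := by
      ext r
      simp only [SimpleGraph.mem_neighborSet, Set.mem_singleton_iff]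
      constructor
      · intro h
        rcases hall r h with h' | h'
        · exact h'
        · exact absurd h' (hex r h)
      · rintro rfl; exact hxa.symm
    have hmem : a ∈ lSet G := by
      simp only [lSet, Set.mem_setOf_eq]
      exact Or.inl (by rw [hNa, Set.ncard_singleton])
    rw [hL] at hmem
    exact absurd hmem (Set.notMem_empty a)

/-- Every neighbor `u` of `v` has a neighbor outside `N[v]`. -/
private lemma exists_out (hL : lSet G = ∅) (h4 : ¬ HasCycleLen G 4) {v u : V}
    (hvu : G.Adj v u) : ∃ w, G.Adj u w ∧ ¬ G.Adj v w ∧ w ≠ v := by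
  by_contra h
  push_neg at h
  apply core hL h4 hvu
  intro r hr
  by_cases h1 : G.Adj v r
  · exact Or.inr h1
  · exact Or.inl (h r hr h1)

private lemma exists_R (hL : lSet G = ∅) (h4 : ¬ HasCycleLen G 4) {x y a : V}
    (hxy : G.Adj x y) (hxa : G.Adj x a) (hya : ¬ G.Adj y a) (hay : a ≠ y) :
    ∃ r, G.Adj a r ∧ ¬ G.Adj x r ∧ ¬ G.Adj y r ∧ r ≠ x ∧ r ≠ y := by
  by_contra h
  push_neg at h
  apply core hL h4 hxa
  intro r hr
  by_cases h1 : G.Adj x r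
  · exact Or.inr h1
  by_cases h2 : r = x
  · exact Or.inl h2
  by_cases h3 : G.Adj y r
  · exact absurd (mk4 hxa hr h3.symm hxy.symm (fun he => h2 he.symm) hay) h4
  · have h5 := h r hr h1 h3 h2
    subst h5
    exact absurd hr.symm hya

private lemma main_relating (hL : lSet G = ∅) (h4 : ¬ HasCycleLen G 4)
    (h5 : ¬ HasCycleLen G 5) (h6 : ¬ HasCycleLen G 6) {x y : V} (hxy : G.Adj x y) :
    ∃ S : Set V, IsIndep G S ∧ IsMaxIndep G (S ∪ {x}) ∧ IsMaxIndep G (S ∪ {y}) := by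
  classical
  set AB : V → Prop := fun a =>
    (G.Adj x a ∧ ¬ G.Adj y a ∧ a ≠ y) ∨ (G.Adj y a ∧ ¬ G.Adj x a ∧ a ≠ x) with hABdef
  have hch : ∀ a : V, ∃ r : V,
      AB a → G.Adj a r ∧ ¬ G.Adj x r ∧ ¬ G.Adj y r ∧ r ≠ x ∧ r ≠ y := by
    intro a
    by_cases h : AB a
    · rcases h with ⟨h1, h2, h3⟩ | ⟨h1, h2, h3⟩
      · obtain ⟨r, hr⟩ := exists_R hL h4 hxy h1 h2 h3
        exact ⟨r, fun _ => hr⟩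
      · obtain ⟨r, hr1, hr2, hr3, hr4, hr5⟩ := exists_R hL h4 hxy.symm h1 h2 h3
        exact ⟨r, fun _ => ⟨hr1, hr3, hr2, hr5, hr4⟩⟩
    · exact ⟨x, fun hc => absurd hc h⟩
  choose f hf using hch
  set T : Set V := f '' {a | AB a} with hTdef
  -- non-adjacency of chosen vertices, same side (A-side):
  have hsame : ∀ x' y' : V, G.Adj x' y' →
      ∀ a b : V, (G.Adj x' a ∧ ¬ G.Adj y' a ∧ a ≠ y') → (G.Adj x' b ∧ ¬ G.Adj y' b ∧ b ≠ y') →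
      a ≠ b →
      ∀ ra rb : V, G.Adj a ra → ¬ G.Adj x' ra → ra ≠ x' → G.Adj b rb → ¬ G.Adj x' rb → rb ≠ x' →
      ¬ G.Adj ra rb := by
    intro x' y' _ a b ⟨ha1, _, _⟩ ⟨hb1, _, _⟩ hab ra rb hara hxra hrax hbrb hxrb hrbx hadj
    -- C5 : x' a ra rb b
    refine h5 (mk5 ha1 hara hadj hbrb.symm hb1.symm ?_ ?_ ?_ ?_ ?_)
    · exact Ne.symm hrax
    · exact Ne.symm hrbx
    · rintro rfl; exact hxrb ha1
    · exact hab
    · rintro rfl; exact hxra hb1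
  have hmixed : ∀ a b : V,
      (G.Adj x a ∧ ¬ G.Adj y a ∧ a ≠ y) → (G.Adj y b ∧ ¬ G.Adj x b ∧ b ≠ x) →
      ∀ ra rb : V, G.Adj a ra → ¬ G.Adj x ra → ¬ G.Adj y ra → ra ≠ x → ra ≠ y →
        G.Adj b rb → ¬ G.Adj x rb → ¬ G.Adj y rb → rb ≠ x → rb ≠ y →
      ¬ G.Adj ra rb := by
    intro a b ⟨ha1, ha2, ha3⟩ ⟨hb1, hb2, hb3⟩ ra rb hara hxra hyra hrax hray
      hbrb hxrb hyrb hrbx hrby hadj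
    -- C6 : x a ra rb b y
    refine h6 (mk6 ha1 hara hadj hbrb.symm hb1.symm hxy.symm ?_ ?_ ?_ ?_ ?_ ?_ ?_ ?_ ?_)
    · exact Ne.symm hrax
    · exact Ne.symm hrbx
    · exact Ne.symm hb3
    · rintro rfl; exact hxrb ha1  -- a = rb
    · rintro rfl; exact hb2 ha1   -- a = b
    · exact ha3                   -- a ≠ y
    · rintro rfl; exact hyra hb1  -- ra = b
    · exact hray                  -- ra ≠ y
    · exact hrby                  -- rb ≠ y
  have hTind : IsIndep G T := by
    rintro t1 ⟨a, ha, rfl⟩ t2 ⟨b, hb, rfl⟩ hne hadj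
    simp only [Set.mem_setOf_eq] at ha hb
    have hab : a ≠ b := fun he => hne (by rw [he])
    have hfa := hf a ha
    have hfb := hf b hb
    rcases ha with ha | ha <;> rcases hb with hb | hb
    · exact hsame x y hxy a b ha hb hab (f a) (f b) hfa.1 hfa.2.1 hfa.2.2.2.1
        hfb.1 hfb.2.1 hfb.2.2.2.1 hadj
    · exact hmixed a b ha hb (f a) (f b) hfa.1 hfa.2.1 hfa.2.2.1 hfa.2.2.2.1 hfa.2.2.2.2
        hfb.1 hfb.2.1 hfb.2.2.1 hfb.2.2.2.1 hfb.2.2.2.2 hadj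
    · exact hmixed b a hb ha (f b) (f a) hfb.1 hfb.2.1 hfb.2.2.1 hfb.2.2.2.1 hfb.2.2.2.2
        hfa.1 hfa.2.1 hfa.2.2.1 hfa.2.2.2.1 hfa.2.2.2.2 hadj.symm
    · exact hsame y x hxy.symm a b ha hb hab (f a) (f b) hfa.1 hfa.2.2.1 hfa.2.2.2.2
        hfb.1 hfb.2.2.1 hfb.2.2.2.2 hadj
  set Rset : Set V := {r | ¬ G.Adj x r ∧ ¬ G.Adj y r ∧ r ≠ x ∧ r ≠ y} with hRdef
  have hTR : T ⊆ Rset := by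
    rintro t ⟨a, ha, rfl⟩
    simp only [Set.mem_setOf_eq] at ha
    have := hf a ha
    exact ⟨this.2.1, this.2.2.1, this.2.2.2.1, this.2.2.2.2⟩
  set F : Set (Set V) := {U | U ⊆ Rset ∧ IsIndep G U ∧ T ⊆ U} with hFdef
  have hTF : T ∈ F := ⟨hTR, hTind, subset_rfl⟩
  have hchain : ∀ c ⊆ F, IsChain (· ⊆ ·) c → c.Nonempty →
      ∃ ub ∈ F, ∀ s ∈ c, s ⊆ ub := by
    rintro c hc hich ⟨s0, hs0⟩
    refine ⟨⋃₀ c, ⟨?_, ?_, ?_⟩, fun s hs => Set.subset_sUnion_of_mem hs⟩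
    · exact Set.sUnion_subset fun s hs => (hc hs).1
    · intro p hp q hq hne hadj
      rw [Set.mem_sUnion] at hp hq
      obtain ⟨sp, hsp, hps⟩ := hp
      obtain ⟨sq, hsq, hqs⟩ := hq
      rcases hich.total hsp hsq with h | h
      · exact (hc hsq).2.1 (h hps) hqs hne hadj
      · exact (hc hsp).2.1 hps (h hqs) hne hadj
    · exact (hc hs0).2.2.trans (Set.subset_sUnion_of_mem hs0)
  obtain ⟨S, hTS, hSF, hSmax⟩ := zorn_subset_nonempty F hchain T hTF
  have hSR : S ⊆ Rset := hSF.1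
  have hSind : IsIndep G S := hSF.2.1
  have hdom : ∀ v ∈ Rset, v ∉ S → ∃ s ∈ S, G.Adj v s := by
    intro v hv hvS
    by_contra hno
    push_neg at hno
    have hins : insert v S ∈ F := by
      refine ⟨?_, ?_, hTS.trans (Set.subset_insert _ _)⟩
      · rw [Set.insert_subset_iff]; exact ⟨hv, hSR⟩
      · intro p hp q hq hne hadj
        rw [Set.mem_insert_iff] at hp hq
        rcases hp with rfl | hp <;> rcases hq with rfl | hq
        · exact hne rfl
        · exact hno q hq hadj
        · exact hno p hp hadj.symm
        · exact hSind hp hq hne hadj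
    exact hvS (hSmax hins (Set.subset_insert _ _) (Set.mem_insert _ _))
  -- final assembly
  have hdomx : ∀ v : V, v ∉ S ∪ {x} → ∃ u ∈ S ∪ {x}, G.Adj u v := by
    intro v hvnot
    have hvx : v ≠ x := fun he => hvnot (Set.mem_union_right _ (by rw [he]; rfl))
    by_cases h1 : G.Adj x v
    · exact ⟨x, Set.mem_union_right _ rfl, h1⟩
    by_cases h2 : v = y
    · exact ⟨x, Set.mem_union_right _ rfl, h2 ▸ hxy⟩
    by_cases h3 : G.Adj y v
    · have hab : AB v := Or.inr ⟨h3, h1, hvx⟩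
      have hfvT : f v ∈ T := ⟨v, hab, rfl⟩
      exact ⟨f v, Set.mem_union_left _ (hTS hfvT), (hf v hab).1.symm⟩
    · have hvR : v ∈ Rset := ⟨h1, h3, hvx, h2⟩
      have hvS : v ∉ S := fun hmem => hvnot (Set.mem_union_left _ hmem)
      obtain ⟨s, hs, hadj⟩ := hdom v hvR hvS
      exact ⟨s, Set.mem_union_left _ hs, hadj.symm⟩
  have hdomy : ∀ v : V, v ∉ S ∪ {y} → ∃ u ∈ S ∪ {y}, G.Adj u v := by
    intro v hvnot
    have hvy : v ≠ y := fun he => hvnot (Set.mem_union_right _ (by rw [he]; rfl))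
    by_cases h1 : G.Adj y v
    · exact ⟨y, Set.mem_union_right _ rfl, h1⟩
    by_cases h2 : v = x
    · exact ⟨y, Set.mem_union_right _ rfl, h2 ▸ hxy.symm⟩
    by_cases h3 : G.Adj x v
    · have hab : AB v := Or.inl ⟨h3, h1, hvy⟩
      have hfvT : f v ∈ T := ⟨v, hab, rfl⟩
      exact ⟨f v, Set.mem_union_left _ (hTS hfvT), (hf v hab).1.symm⟩
    · have hvR : v ∈ Rset := ⟨h3, h1, h2, hvy⟩
      have hvS : v ∉ S := fun hmem => hvnot (Set.mem_union_left _ hmem)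
      obtain ⟨s, hs, hadj⟩ := hdom v hvR hvS
      exact ⟨s, Set.mem_union_left _ hs, hadj.symm⟩
  have hindx : IsIndep G (S ∪ {x}) := by
    intro p hp q hq hne hadj
    rw [Set.mem_union, Set.mem_singleton_iff] at hp hq
    rcases hp with hp | rfl <;> rcases hq with hq | rfl
    · exact hSind hp hq hne hadj
    · exact (hSR hp).1 hadj.symm
    · exact (hSR hq).1 hadj
    · exact hne rfl
  have hindy : IsIndep G (S ∪ {y}) := by
    intro p hp q hq hne hadj
    rw [Set.mem_union, Set.mem_singleton_iff] at hp hq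
    rcases hp with hp | rfl <;> rcases hq with hq | rfl
    · exact hSind hp hq hne hadj
    · exact (hSR hp).2.1 hadj.symm
    · exact (hSR hq).2.1 hadj
    · exact hne rfl
  refine ⟨S, hSind, ⟨hindx, ?_⟩, ⟨hindy, ?_⟩⟩
  · intro W hW hsub
    refine Set.Subset.antisymm ?_ hsub
    intro v hv
    by_contra hvnot
    obtain ⟨u, hu, hadj⟩ := hdomx v hvnot
    exact hW (hsub hu) hv hadj.ne hadj
  · intro W hW hsub
    refine Set.Subset.antisymm ?_ hsub
    intro v hv
    by_contra hvnot
    obtain ⟨u, hu, hadj⟩ := hdomy v hvnot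
    exact hW (hsub hu) hv hadj.ne hadj

end Aux

/-- in a graph with no `C₄`, `C₅`, `C₆`, if `L(G) = ∅` then every
edge of `G` is relating (in particular, `D(v) = ∅` for every vertex `v`). -/
theorem stmt_14 {V : Type*} [Fintype V] (G : SimpleGraph V)
    (h4 : ¬ HasCycleLen G 4) (h5 : ¬ HasCycleLen G 5) (h6 : ¬ HasCycleLen G 6)
    (hL : lSet G = ∅) :
    (∀ x y : V, G.Adj x y → IsRelating G x y) ∧ (∀ v : V, dSet G v = ∅) := by
  constructor
  · intro x y hxy
    exact ⟨hxy, main_relating hL h4 h5 h6 hxy⟩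
  · intro v
    ext u
    simp only [dSet, Set.mem_diff, SimpleGraph.mem_neighborSet, Set.mem_empty_iff_false,
      iff_false, not_and, not_not]
    intro hu
    obtain ⟨w, huw, hvw, hwv⟩ := exists_out hL h4 hu
    have hw2 : w ∈ n2 G {v} := by
      refine ⟨?_, u, ⟨?_, v, rfl, hu.symm⟩, huw.symm⟩
      · rintro (h | ⟨s, hs, hadj⟩)
        · exact hwv h
        · rw [Set.mem_singleton_iff] at hs
          subst hs
          exact hvw hadj.symm
      · exact hu.ne'
    refine ⟨?_, w, hw2, huw⟩
    rintro ⟨h1, -⟩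
    exact h1 (Or.inr ⟨v, rfl, hu.symm⟩)
end

section
/- Let G = (V,E) be a connected finite simple graph containing no cycle of length 4, no cycle of length 5, and no cycle of length 6 (as subgraphs, not necessarily induced), with L(G) = ∅, and suppose G is not well-covered. Then the only weight function w : V → ℝ for which G is w-well-covered is the zero function; i.e., WCW(G) = {0}. -/
namespace WC

variable {V : Type*}

open SimpleGraph

variable {V : Type*}

lemma cyc4 {G : SimpleGraph V} {a b c d : V}
    (hab : G.Adj a b) (hbc : G.Adj b c) (hcd : G.Adj c d) (hda : G.Adj d a)
    (hac : a ≠ c) (hbd : b ≠ d) : HasCycleLen G 4 := by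
  refine ⟨a, Walk.cons hab (Walk.cons hbc (Walk.cons hcd (Walk.cons hda Walk.nil))), ?_, rfl⟩
  have h1 := hab.ne; have h2 := hbc.ne; have h3 := hcd.ne; have h4 := hda.ne'
  rw [Walk.isCycle_def, Walk.isTrail_def]
  refine ⟨?_, by simp, ?_⟩
  · simp [Sym2.eq_iff]; aesop
  · simp; aesop

lemma cyc5 {G : SimpleGraph V} {a b c d e : V}
    (hab : G.Adj a b) (hbc : G.Adj b c) (hcd : G.Adj c d) (hde : G.Adj d e)
    (hea : G.Adj e a)
    (hac : a ≠ c) (had : a ≠ d) (hbd : b ≠ d) (hbe : b ≠ e) (hce : c ≠ e) :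
    HasCycleLen G 5 := by
  refine ⟨a, Walk.cons hab (Walk.cons hbc (Walk.cons hcd (Walk.cons hde
    (Walk.cons hea Walk.nil)))), ?_, rfl⟩
  have h1 := hab.ne; have h2 := hbc.ne; have h3 := hcd.ne; have h4 := hde.ne
  have h5 := hea.ne'
  rw [Walk.isCycle_def, Walk.isTrail_def]
  refine ⟨?_, by simp, ?_⟩
  · simp [Sym2.eq_iff]; aesop
  · simp; aesop

lemma cyc6 {G : SimpleGraph V} {a b c d e f : V}
    (hab : G.Adj a b) (hbc : G.Adj b c) (hcd : G.Adj c d) (hde : G.Adj d e)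
    (hef : G.Adj e f) (hfa : G.Adj f a)
    (hac : a ≠ c) (had : a ≠ d) (hae : a ≠ e) (hbd : b ≠ d) (hbe : b ≠ e)
    (hbf : b ≠ f) (hce : c ≠ e) (hcf : c ≠ f) (hdf : d ≠ f) :
    HasCycleLen G 6 := by
  refine ⟨a, Walk.cons hab (Walk.cons hbc (Walk.cons hcd (Walk.cons hde
    (Walk.cons hef (Walk.cons hfa Walk.nil))))), ?_, rfl⟩
  have h1 := hab.ne; have h2 := hbc.ne; have h3 := hcd.ne; have h4 := hde.ne
  have h5 := hef.ne; have h6 := hfa.ne'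
  rw [Walk.isCycle_def, Walk.isTrail_def]
  refine ⟨?_, by simp, ?_⟩
  · simp [Sym2.eq_iff]; aesop
  · simp; aesop

lemma isIndep_insert {G : SimpleGraph V} {S : Set V} {v : V} (hS : IsIndep G S)
    (h : ∀ s ∈ S, ¬ G.Adj v s) : IsIndep G (insert v S) := by
  haveI : Std.Symm (fun a b : V => ¬ G.Adj a b) := ⟨fun a b hab h2 => hab (G.adj_symm h2)⟩
  exact (Set.pairwise_insert_of_symm).2 ⟨hS, fun b hb _ => h b hb⟩

lemma isMaxIndep_of_dom {G : SimpleGraph V} {S : Set V} (hS : IsIndep G S)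
    (hdom : ∀ v, v ∉ S → ∃ s ∈ S, G.Adj v s) : IsMaxIndep G S := by
  refine ⟨hS, fun T hT hST => ?_⟩
  by_contra h
  obtain ⟨v, hvT, hvS⟩ := Set.not_subset.1 (fun h' => h (h'.antisymm hST))
  obtain ⟨s, hsS, hadj⟩ := hdom v hvS
  exact hT hvT (hST hsS) hadj.ne hadj

lemma exists_maxIndepOn [Finite V] (G : SimpleGraph V) (A I : Set V)
    (hIA : I ⊆ A) (hI : IsIndep G I) :
    ∃ S, I ⊆ S ∧ IsMaxIndepOn G A S := by
  have hfin : {S : Set V | I ⊆ S ∧ S ⊆ A ∧ IsIndep G S}.Finite := Set.toFinite _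
  obtain ⟨S, hS, hmax⟩ := hfin.exists_maximalFor id _ ⟨I, subset_rfl, hIA, hI⟩
  refine ⟨S, hS.1, hS.2.1, hS.2.2, fun T hTA hT hST => ?_⟩
  exact Set.Subset.antisymm (hmax ⟨hS.1.trans hST, hTA, hT⟩ hST) hST

lemma maxIndepOn_dom {G : SimpleGraph V} {A S : Set V} (h : IsMaxIndepOn G A S) :
    ∀ v ∈ A, v ∉ S → ∃ s ∈ S, G.Adj v s := by
  intro v hvA hvS
  by_contra hc; push_neg at hc
  have heq := h.2.2 (insert v S) (Set.insert_subset hvA h.1)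
    (isIndep_insert h.2.1 hc) (Set.subset_insert _ _)
  exact hvS (heq ▸ Set.mem_insert v S)

lemma wsum_eq [Fintype V] (w : V → ℝ) (S : Set V) :
    wsum w S = ∑ x ∈ S.toFinite.toFinset, w x := by
  rw [wsum, ← finsum_mem_coe_finset, Set.Finite.coe_toFinset]

lemma wsum_union_singleton [Fintype V] (w : V → ℝ) {S : Set V} {a : V} (ha : a ∉ S) :
    wsum w (S ∪ {a}) = wsum w S + w a := by
  classical
  rw [wsum_eq, wsum_eq]
  have : (S ∪ {a}).toFinite.toFinset = insert a S.toFinite.toFinset := by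
    ext x
    simp only [Set.Finite.mem_toFinset, Finset.mem_insert, Set.mem_union,
      Set.mem_singleton_iff]
    tauto
  rw [this, Finset.sum_insert (by simpa using ha)]
  ring

lemma wsum_const [Fintype V] {w : V → ℝ} {c : ℝ} (hc : ∀ v, w v = c) (S : Set V) :
    wsum w S = S.ncard * c := by
  rw [wsum_eq, Finset.sum_congr rfl (fun x _ => hc x), Finset.sum_const,
    Set.ncard_eq_toFinset_card S S.toFinite, nsmul_eq_mul]

lemma wsum_zero [Fintype V] (S : Set V) : wsum (0 : V → ℝ) S = 0 := by
  simp [wsum_eq]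

/-- Vertices outside both closed neighborhoods of `x` and `y`. -/
def Rset (G : SimpleGraph V) (x y : V) : Set V :=
  {v | ¬ G.Adj x v ∧ ¬ G.Adj y v ∧ v ≠ x ∧ v ≠ y}

/-- Vertices of `Rset` adjacent to a neighbor of `x` or `y`. -/
def Pset (G : SimpleGraph V) (x y : V) : Set V :=
  {v | v ∈ Rset G x y ∧ ∃ u, (G.Adj x u ∨ G.Adj y u) ∧ G.Adj v u}

lemma Rset_comm (G : SimpleGraph V) (x y : V) : Rset G x y = Rset G y x := by
  ext v; simp only [Rset, Set.mem_setOf_eq]; tauto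

lemma Pset_comm (G : SimpleGraph V) (x y : V) : Pset G x y = Pset G y x := by
  ext v
  constructor <;> rintro ⟨hR, u, h1, h2⟩
  · exact ⟨Rset_comm G x y ▸ hR, u, h1.symm, h2⟩
  · exact ⟨Rset_comm G y x ▸ hR, u, h1.symm, h2⟩

lemma neighbor_in_R {G : SimpleGraph V}
    (h4 : ¬ HasCycleLen G 4) (hL : lSet G = ∅) {x y u : V}
    (hxy : G.Adj x y) (hxu : G.Adj x u) (hyu : ¬ G.Adj y u) (huy : u ≠ y) :
    ∃ t, G.Adj u t ∧ ¬ G.Adj x t ∧ ¬ G.Adj y t ∧ t ≠ x ∧ t ≠ y := by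
  by_contra hc
  push_neg at hc
  have hnotL : u ∉ lSet G := by simp [hL]
  have key : ∀ t, G.Adj u t → t ≠ x → G.Adj x t := by
    intro t hut htx
    by_contra hxt
    by_cases hyt : G.Adj y t
    · -- C4 : x u t y
      exact h4 (cyc4 hxu hut hyt.symm hxy.symm (Ne.symm htx) huy)
    · have hty : t ≠ y := by rintro rfl; exact hyu (G.adj_symm hut)
      exact hty (hc t hut hxt hyt htx)
  by_cases hex : ∃ t, G.Adj u t ∧ t ≠ x
  · obtain ⟨t, hut, htx⟩ := hex
    have hxt := key t hut htx
    have hNu : G.neighborSet u = {x, t} := by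
      ext t'
      simp only [SimpleGraph.mem_neighborSet, Set.mem_insert_iff, Set.mem_singleton_iff]
      constructor
      · intro hut'
        by_contra h'
        push_neg at h'
        have hxt' := key t' hut' h'.1
        -- C4 : u t x t'
        exact h4 (cyc4 hut hxt.symm hxt' (G.adj_symm hut') hxu.ne' (Ne.symm h'.2))
      · rintro (rfl | rfl)
        · exact G.adj_symm hxu
        · exact hut
    refine hnotL (Or.inr ⟨?_, x, t, G.adj_symm hxu, hut, hxt⟩)
    rw [hNu]
    exact Set.ncard_pair hxt.ne
  · push_neg at hex
    have hNu : G.neighborSet u = {x} := by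
      ext t'
      simp only [SimpleGraph.mem_neighborSet, Set.mem_singleton_iff]
      exact ⟨fun h => hex t' h, fun h => h ▸ G.adj_symm hxu⟩
    exact hnotL (Or.inl (by rw [hNu]; exact Set.ncard_singleton x))

lemma dom_claim {G : SimpleGraph V}
    (h4 : ¬ HasCycleLen G 4) (h5 : ¬ HasCycleLen G 5) (h6 : ¬ HasCycleLen G 6)
    (hL : lSet G = ∅) {x y : V} (hxy : G.Adj x y) {S0 S : Set V}
    (hS0 : IsMaxIndepOn G (Pset G x y) S0) (hS : IsMaxIndepOn G (Rset G x y) S)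
    (hsub : S0 ⊆ S) {u : V} (hxu : G.Adj x u) (hyu : ¬ G.Adj y u) (huy : u ≠ y) :
    ∃ s ∈ S, G.Adj u s := by
  by_contra hc; push_neg at hc
  obtain ⟨t, hut, htx, hty, htnx, htny⟩ := neighbor_in_R h4 hL hxy hxu hyu huy
  have htP : t ∈ Pset G x y := ⟨⟨htx, hty, htnx, htny⟩, u, Or.inl hxu, G.adj_symm hut⟩
  have htS : t ∉ S0 := fun h => hc t (hsub h) hut
  obtain ⟨s, hsS0, hts⟩ := maxIndepOn_dom hS0 t htP htS
  have hsS : s ∈ S := hsub hsS0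
  obtain ⟨⟨hsx, hsy, hsnx, hsny⟩, u', hu', hsu'⟩ := hS0.1 hsS0
  have hus : ¬ G.Adj u s := hc s hsS
  have hune : u ≠ s := by rintro rfl; exact hsx hxu
  have huu' : u ≠ u' := by rintro rfl; exact hus (G.adj_symm hsu')
  rcases hu' with hxu' | hyu'
  · -- C5 : x u t s u'
    have htu' : t ≠ u' := by rintro rfl; exact htx hxu'
    exact h5 (cyc5 hxu hut hts hsu' (G.adj_symm hxu')
      (Ne.symm htnx) (Ne.symm hsnx) hune huu' htu')
  · -- C6 : x u t s u' y
    have hxu' : x ≠ u' := by rintro rfl; exact hsx (G.adj_symm hsu')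
    have htu' : t ≠ u' := by rintro rfl; exact hty hyu'
    exact h6 (cyc6 hxu hut hts hsu' (G.adj_symm hyu') (G.adj_symm hxy)
      (Ne.symm htnx) (Ne.symm hsnx) hxu' hune huu' huy htu' htny hsny)

lemma edge_relating [Fintype V] {G : SimpleGraph V}
    (h4 : ¬ HasCycleLen G 4) (h5 : ¬ HasCycleLen G 5) (h6 : ¬ HasCycleLen G 6)
    (hL : lSet G = ∅) {x y : V} (hxy : G.Adj x y) : IsRelating G x y := by
  have hPR : Pset G x y ⊆ Rset G x y := fun v hv => hv.1
  obtain ⟨S0, -, hS0⟩ := exists_maxIndepOn G (Pset G x y) ∅ (Set.empty_subset _)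
    (Set.pairwise_empty _)
  obtain ⟨S, hsub, hS⟩ := exists_maxIndepOn G (Rset G x y) S0 (hS0.1.trans hPR) hS0.2.1
  have hSR := hS.1
  have hSind := hS.2.1
  have hS0' : IsMaxIndepOn G (Pset G y x) S0 := Pset_comm G x y ▸ hS0
  have hS' : IsMaxIndepOn G (Rset G y x) S := Rset_comm G x y ▸ hS
  have hdomx : ∀ v, v ∉ S ∪ {x} → ∃ s ∈ S ∪ {x}, G.Adj v s := by
    intro v hv
    have hvx : v ≠ x := fun h => hv (h ▸ Or.inr rfl)
    by_cases h1 : G.Adj x v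
    · exact ⟨x, Or.inr rfl, G.adj_symm h1⟩
    by_cases h2 : G.Adj y v
    · obtain ⟨s, hs, hvs⟩ := dom_claim h4 h5 h6 hL (G.adj_symm hxy) hS0' hS' hsub h2 h1 hvx
      exact ⟨s, Or.inl hs, hvs⟩
    · have hvR : v ∈ Rset G x y := ⟨h1, h2, hvx, fun h => h1 (h ▸ hxy)⟩
      have hvS : v ∉ S := fun h => hv (Or.inl h)
      obtain ⟨s, hs, hvs⟩ := maxIndepOn_dom hS v hvR hvS
      exact ⟨s, Or.inl hs, hvs⟩
  have hdomy : ∀ v, v ∉ S ∪ {y} → ∃ s ∈ S ∪ {y}, G.Adj v s := by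
    intro v hv
    have hvy : v ≠ y := fun h => hv (h ▸ Or.inr rfl)
    by_cases h2 : G.Adj y v
    · exact ⟨y, Or.inr rfl, G.adj_symm h2⟩
    by_cases h1 : G.Adj x v
    · obtain ⟨s, hs, hvs⟩ := dom_claim h4 h5 h6 hL hxy hS0 hS hsub h1 h2 hvy
      exact ⟨s, Or.inl hs, hvs⟩
    · have hvR : v ∈ Rset G x y := ⟨h1, h2, fun h => h2 (h ▸ G.adj_symm hxy), hvy⟩
      have hvS : v ∉ S := fun h => hv (Or.inl h)
      obtain ⟨s, hs, hvs⟩ := maxIndepOn_dom hS v hvR hvS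
      exact ⟨s, Or.inl hs, hvs⟩
  have hindx : IsIndep G (S ∪ {x}) := by
    rw [Set.union_singleton]
    exact isIndep_insert hSind (fun s hs => (hSR hs).1)
  have hindy : IsIndep G (S ∪ {y}) := by
    rw [Set.union_singleton]
    exact isIndep_insert hSind (fun s hs => (hSR hs).2.1)
  exact ⟨hxy, S, hSind, isMaxIndep_of_dom hindx hdomx, isMaxIndep_of_dom hindy hdomy⟩

end WC

open WC

/-- in a connected graph with no `C₄`, `C₅`, `C₆`, `L(G) = ∅` and
not well-covered, the only weight function making `G` `w`-well-covered is the
zero function: `WCW(G) = {0}`. -/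
theorem stmt_16 {V : Type*} [Fintype V] (G : SimpleGraph V) (hconn : G.Connected)
    (h4 : ¬ HasCycleLen G 4) (h5 : ¬ HasCycleLen G 5) (h6 : ¬ HasCycleLen G 6)
    (hL : lSet G = ∅) (hnwc : ¬ WellCovered G) :
    {w : V → ℝ | WWC G w} = {0} := by
  ext w
  simp only [Set.mem_setOf_eq, Set.mem_singleton_iff]
  constructor
  · intro hw
    have hrel : ∀ a b : V, G.Adj a b → w a = w b := by
      intro a b hab
      obtain ⟨-, S, hSind, hSA, hSB⟩ := edge_relating h4 h5 h6 hL hab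
      have haS : a ∉ S := fun h =>
        hSB.1 (Set.mem_union_left _ h) (Set.mem_union_right _ rfl) hab.ne hab
      have hbS : b ∉ S := fun h =>
        hSA.1 (Set.mem_union_left _ h) (Set.mem_union_right _ rfl) hab.ne' (G.adj_symm hab)
      have h1 := wsum_union_singleton w haS
      have h2 := wsum_union_singleton w hbS
      have h3 := hw _ _ hSA hSB
      rw [h2, h1] at h3
      linarith
    obtain ⟨v0⟩ := hconn.nonempty
    have hwalk : ∀ (u v : V) (p : G.Walk u v), w u = w v := by
      intro u v p
      induction p with
      | nil => rfl
      | cons h p ih => exact (hrel _ _ h).trans ih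
    have hconst : ∀ v, w v = w v0 := fun v =>
      (hconn.preconnected v v0).elim (fun p => hwalk _ _ p)
    rw [WellCovered] at hnwc
    push_neg at hnwc
    obtain ⟨S, T, hS, hT, hne⟩ := hnwc
    have h3 := hw S T hS hT
    rw [wsum_const hconst S, wsum_const hconst T] at h3
    have hcard : (S.ncard : ℝ) ≠ (T.ncard : ℝ) := fun h =>
      hne (Nat.cast_injective h)
    have hc0 : w v0 = 0 := by
      rcases mul_eq_mul_right_iff.1 h3 with h | h
      · exact absurd h hcard
      · exact h
    funext v
    rw [hconst v, hc0]
    rfl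
  · rintro rfl
    intro S T _ _
    rw [wsum_zero, wsum_zero]
end
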